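/- The one-sided upper Clopper-Pearson confidence interval at level 1-α has coverage at least 1-α: for every p ∈ [0,1], P_{X∼Bin(n,p)}(u(X) ≤ p) ≥ 1-α, where u(x) = inf{q ∈ [0,1] : P(Bin(n,q) ≥ x) > α}. -/
import Mathlib


open Classical in
/-- The one-sided upper Clopper-Pearson confidence interval at level `1-α`
has coverage at least `1-α`: for every `p ∈ [0,1]`,
`P_{X∼Bin(n,p)}(u(X) ≤ p) ≥ 1-α`, where `u(x) = inf{q ∈ [0,1] : P(Bin(n,q) ≥ x) > α}`. -/
theorem clopper_pearson_coverage (n : ℕ) (hn : 1 ≤ n) (α : ℝ) (hα : α ∈ Set.Ioo (0 : ℝ) 1)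
    (p : ℝ) (hp : p ∈ Set.Icc (0 : ℝ) 1) :
    1 - α ≤ ∑ x ∈ Finset.range (n + 1),
      (if sInf {q : ℝ | q ∈ Set.Icc (0 : ℝ) 1 ∧
            α < ∑ k ∈ Finset.Icc x n, (n.choose k : ℝ) * q ^ k * (1 - q) ^ (n - k)} ≤ p
       then (n.choose x : ℝ) * p ^ x * (1 - p) ^ (n - x) else 0) := by
  obtain ⟨hα0, hα1⟩ := hα
  obtain ⟨hp0, hp1⟩ := hp
  set pmf : ℕ → ℝ := fun x => (n.choose x : ℝ) * p ^ x * (1 - p) ^ (n - x) with hpmfdef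
  have hpmf : ∀ x, 0 ≤ pmf x := fun x =>
    mul_nonneg (mul_nonneg (by positivity) (pow_nonneg hp0 _)) (pow_nonneg (by linarith) _)
  set f : ℕ → ℝ := fun x => ∑ k ∈ Finset.Icc x n, pmf k with hfdef
  have hsum : ∑ x ∈ Finset.range (n + 1), pmf x = 1 := by
    have h1 : (p + (1 - p)) ^ n
        = ∑ k ∈ Finset.range (n + 1), p ^ k * (1 - p) ^ (n - k) * (n.choose k : ℝ) :=
      add_pow p (1 - p) n
    rw [show p + (1 - p) = (1 : ℝ) by ring, one_pow] at h1
    have h2 : ∑ k ∈ Finset.range (n + 1), p ^ k * (1 - p) ^ (n - k) * (n.choose k : ℝ)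
        = ∑ x ∈ Finset.range (n + 1), pmf x :=
      Finset.sum_congr rfl fun x _ => by simp only [hpmfdef]; ring
    exact (h1.trans h2).symm
  -- pointwise lower bound
  have hpt : ∀ x ∈ Finset.range (n + 1),
      (if α < f x then pmf x else 0) ≤
      (if sInf {q : ℝ | q ∈ Set.Icc (0 : ℝ) 1 ∧
            α < ∑ k ∈ Finset.Icc x n, (n.choose k : ℝ) * q ^ k * (1 - q) ^ (n - k)} ≤ p
       then pmf x else 0) := by
    intro x _
    by_cases h : α < f x
    · have hmem : p ∈ {q : ℝ | q ∈ Set.Icc (0 : ℝ) 1 ∧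
            α < ∑ k ∈ Finset.Icc x n, (n.choose k : ℝ) * q ^ k * (1 - q) ^ (n - k)} :=
        ⟨⟨hp0, hp1⟩, h⟩
      have hbdd : BddBelow {q : ℝ | q ∈ Set.Icc (0 : ℝ) 1 ∧
            α < ∑ k ∈ Finset.Icc x n, (n.choose k : ℝ) * q ^ k * (1 - q) ^ (n - k)} :=
        ⟨0, fun q hq => hq.1.1⟩
      have hle := csInf_le hbdd hmem
      rw [if_pos h]
      split
      · exact le_rfl
      · next h' => exact absurd hle h' 
    · simp only [h, if_false]
      split <;> [exact hpmf x; exact le_rfl]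
  refine le_trans ?_ (Finset.sum_le_sum hpt)
  -- now show 1 - α ≤ ∑ if α < f x then pmf x else 0
  have hsplit : ∑ x ∈ Finset.range (n + 1), (if α < f x then pmf x else 0)
      = 1 - ∑ x ∈ Finset.range (n + 1), (if f x ≤ α then pmf x else 0) := by
    rw [← hsum, ← Finset.sum_sub_distrib]
    refine Finset.sum_congr rfl fun x _ => ?_
    by_cases h : α < f x
    · simp [h, not_le.mpr h]
    · simp [h, not_lt.mp h]
  rw [hsplit]
  have hcomp : ∑ x ∈ Finset.range (n + 1), (if f x ≤ α then pmf x else 0) ≤ α := by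
    rw [← Finset.sum_filter]
    set T := (Finset.range (n + 1)).filter (fun x => f x ≤ α) with hT
    rcases T.eq_empty_or_nonempty with hTe | hTne
    · rw [hTe]; simpa using le_of_lt hα0
    · set x₀ := T.min' hTne with hx₀
      have hx₀mem : x₀ ∈ T := T.min'_mem hTne
      have hx₀le : f x₀ ≤ α := (Finset.mem_filter.mp hx₀mem).2
      have hsub : T ⊆ Finset.Icc x₀ n := by
        intro x hx
        have h1 : x₀ ≤ x := T.min'_le x hx
        have h2 : x < n + 1 := Finset.mem_range.mp (Finset.mem_filter.mp hx).1
        exact Finset.mem_Icc.mpr ⟨h1, Nat.lt_succ_iff.mp h2⟩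
      calc ∑ x ∈ T, pmf x ≤ ∑ x ∈ Finset.Icc x₀ n, pmf x :=
            Finset.sum_le_sum_of_subset_of_nonneg hsub (fun i _ _ => hpmf i)
        _ = f x₀ := rfl
        _ ≤ α := hx₀le
  linarith
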